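/- There exists m₀ such that for all m ≥ m₀ and all integers k ≥ 1 with 100·k ≤ 99·m, the function DISJ^m_k has a (1/10, ⌊k/100⌋)-hitting distribution over its 0-monochromatic rectangles. -/

import Mathlib

open Finset

/-- The probability, under a distribution `μ` on rectangles `R = R.1 × R.2 ⊆ α × β`,
that the sampled rectangle intersects `X × Y`. -/
noncomputable def hitProb {α β : Type*} [Fintype α] [Fintype β] [DecidableEq α] [DecidableEq β]
    (μ : Finset α × Finset β → ℝ) (X : Finset α) (Y : Finset β) : ℝ :=
  ∑ R ∈ Finset.univ.filter
      (fun R : Finset α × Finset β => (R.1 ∩ X).Nonempty ∧ (R.2 ∩ Y).Nonempty), μ R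

/-- `μ` is a probability distribution on rectangles of `α × β`. -/
def IsDistribution {α β : Type*} [Fintype α] [Fintype β]
    (μ : Finset α × Finset β → ℝ) : Prop :=
  (∀ R, 0 ≤ μ R) ∧ ∑ R, μ R = 1

/-- `μ` is a `(δ, h)`-hitting distribution: every `X × Y` with
`|X| ≥ 2^(−h)·|α|` and `|Y| ≥ 2^(−h)·|β|` is hit with probability at least `1 − δ`. -/
def IsHitting {α β : Type*} [Fintype α] [Fintype β] [DecidableEq α] [DecidableEq β]
    (μ : Finset α × Finset β → ℝ) (δ : ℝ) (h : ℤ) : Prop :=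
  ∀ X : Finset α, ∀ Y : Finset β,
    (2 : ℝ) ^ (-h) * (Fintype.card α : ℝ) ≤ X.card →
    (2 : ℝ) ^ (-h) * (Fintype.card β : ℝ) ≤ Y.card →
    1 - δ ≤ hitProb μ X Y

/-- The set of `k`-element subsets of `{1,…,m}`, the common domain of both inputs of
`DISJ^m_k`. -/
abbrev KSubset (m k : ℕ) := {s : Finset (Fin m) // s.card = k}

lemma descF_ineq (t m : ℕ) (htm : t ≤ m) : ∀ k : ℕ,
    m ^ k * Nat.descFactorial t k ≤ t ^ k * Nat.descFactorial m k := by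
  intro k
  induction k with
  | zero => simp
  | succ k ih =>
    rw [Nat.descFactorial_succ, Nat.descFactorial_succ, pow_succ, pow_succ]
    calc m ^ k * m * ((t - k) * Nat.descFactorial t k)
        = (m * (t - k)) * (m ^ k * Nat.descFactorial t k) := by ring
      _ ≤ (t * (m - k)) * (t ^ k * Nat.descFactorial m k) := by
          apply Nat.mul_le_mul _ ih
          rcases Nat.le_total k t with h | h
          · rw [Nat.mul_sub, Nat.mul_sub]
            have h1 : t * k ≤ m * k := Nat.mul_le_mul_right k htm
            have h2 : m * t = t * m := Nat.mul_comm m t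
            omega
          · have : t - k = 0 := by omega
            simp [this]
      _ = t ^ k * t * ((m - k) * Nat.descFactorial m k) := by ring

lemma choose_pow_ineq (t m k : ℕ) (htm : t ≤ m) :
    m ^ k * Nat.choose t k ≤ t ^ k * Nat.choose m k := by
  have h := descF_ineq t m htm k
  rw [Nat.descFactorial_eq_factorial_mul_choose, Nat.descFactorial_eq_factorial_mul_choose] at h
  have hk : 0 < Nat.factorial k := Nat.factorial_pos k
  calc m ^ k * Nat.choose t k = (Nat.factorial k * (m ^ k * Nat.choose t k)) / Nat.factorial k := by
        rw [Nat.mul_div_cancel_left _ hk]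
    _ ≤ (Nat.factorial k * (t ^ k * Nat.choose m k)) / Nat.factorial k := by
        apply Nat.div_le_div_right
        calc Nat.factorial k * (m ^ k * Nat.choose t k)
            = m ^ k * (Nat.factorial k * Nat.choose t k) := by ring
          _ ≤ t ^ k * (Nat.factorial k * Nat.choose m k) := h
          _ = Nat.factorial k * (t ^ k * Nat.choose m k) := by ring
    _ = t ^ k * Nat.choose m k := Nat.mul_div_cancel_left _ hk

lemma key_pow (k : ℕ) (hk : 1 ≤ k) : 2 ^ (k / 100) * 19 ^ k < 20 ^ k := by
  obtain ⟨q, r, hr, hkk⟩ : ∃ q r, r < 100 ∧ k = 100 * q + r :=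
    ⟨k / 100, k % 100, Nat.mod_lt _ (by norm_num), (Nat.div_add_mod k 100).symm⟩
  have hq : k / 100 = q := by omega
  subst hkk
  rw [hq]
  have base : 2 * 19 ^ 100 < 20 ^ 100 := by norm_num
  rcases Nat.eq_zero_or_pos q with hq0 | hq0
  · subst hq0
    simp only [pow_zero, one_mul, Nat.mul_zero, Nat.zero_add]
    exact Nat.pow_lt_pow_left (by norm_num) (by omega)
  · have h1 : (2 * 19 ^ 100) ^ q < (20 ^ 100) ^ q := Nat.pow_lt_pow_left base (by omega)
    have h2 : 2 ^ q * 19 ^ (100 * q) = (2 * 19 ^ 100) ^ q := by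
      rw [mul_pow, ← pow_mul]
    have h3 : (20:ℕ) ^ (100 * q) = (20 ^ 100) ^ q := by rw [← pow_mul]
    calc 2 ^ q * 19 ^ (100 * q + r) = (2 ^ q * 19 ^ (100 * q)) * 19 ^ r := by rw [pow_add]; ring
      _ = (2 * 19 ^ 100) ^ q * 19 ^ r := by rw [h2]
      _ < (20 ^ 100) ^ q * 20 ^ r := by
          apply Nat.mul_lt_mul_of_lt_of_le h1 (Nat.pow_le_pow_left (by norm_num) r) (by positivity)
      _ = 20 ^ (100 * q + r) := by rw [pow_add, h3]

lemma union_large (m k : ℕ) (hk : 1 ≤ k) (hkm : 100 * k ≤ 99 * m)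
    (X : Finset (KSubset m k)) (hX : Nat.choose m k ≤ 2 ^ (k / 100) * X.card) :
    19 * m < 20 * (X.biUnion fun a => a.1).card := by
  by_contra hcon
  push_neg at hcon
  set t := (X.biUnion fun a => a.1).card with ht
  have htm : t ≤ m := by
    have := Finset.card_le_univ (X.biUnion fun a => a.1)
    simpa using this
  have hXle : X.card ≤ Nat.choose t k := by
    have h1 : X.card ≤ ((X.biUnion fun a => a.1).powersetCard k).card := by
      apply Finset.card_le_card_of_injOn (fun a => a.1)
      · intro a ha
        rw [Finset.mem_coe, Finset.mem_powersetCard]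
        exact ⟨fun x hx => Finset.mem_biUnion.2 ⟨a, ha, hx⟩, a.2⟩
      · intro a _ b _ hab
        exact Subtype.ext hab
    rwa [Finset.card_powersetCard] at h1
  have hkm' : k ≤ m := by omega
  have hm : 0 < m := by omega
  have hchoose : 0 < Nat.choose m k := Nat.choose_pos hkm'
  have A : Nat.choose m k ≤ 2 ^ (k / 100) * Nat.choose t k :=
    le_trans hX (Nat.mul_le_mul_left _ hXle)
  have B := choose_pow_ineq t m k htm
  have C1 : (20 * t) ^ k ≤ (19 * m) ^ k := Nat.pow_le_pow_left hcon k
  have pos : 0 < m ^ k * Nat.choose m k := Nat.mul_pos (Nat.pow_pos hm) hchoose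
  have final : 20 ^ k * (m ^ k * Nat.choose m k) < 20 ^ k * (m ^ k * Nat.choose m k) := by
    calc 20 ^ k * (m ^ k * Nat.choose m k)
        ≤ 20 ^ k * (m ^ k * (2 ^ (k / 100) * Nat.choose t k)) :=
          Nat.mul_le_mul_left _ (Nat.mul_le_mul_left _ A)
      _ = 2 ^ (k / 100) * (20 ^ k * (m ^ k * Nat.choose t k)) := by ring
      _ ≤ 2 ^ (k / 100) * (20 ^ k * (t ^ k * Nat.choose m k)) :=
          Nat.mul_le_mul_left _ (Nat.mul_le_mul_left _ B)
      _ = 2 ^ (k / 100) * ((20 * t) ^ k * Nat.choose m k) := by rw [mul_pow]; ring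
      _ ≤ 2 ^ (k / 100) * ((19 * m) ^ k * Nat.choose m k) :=
          Nat.mul_le_mul_left _ (Nat.mul_le_mul_right _ C1)
      _ = (2 ^ (k / 100) * 19 ^ k) * (m ^ k * Nat.choose m k) := by rw [mul_pow]; ring
      _ < 20 ^ k * (m ^ k * Nat.choose m k) :=
          Nat.mul_lt_mul_of_lt_of_le (key_pow k hk) (le_refl _) pos
  exact absurd final (lt_irrefl _)


set_option maxHeartbeats 1600000 in
/-- There exists `m₀` such that for all `m ≥ m₀` and all integers `k ≥ 1`
with `100·k ≤ 99·m`, the function `DISJ^m_k` has a `(1/10, ⌊k/100⌋)`-hitting distribution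
over its 0-monochromatic rectangles (rectangles on which the two subsets always
intersect). -/
theorem disjointness_zero_hitting :
    ∃ m₀ : ℕ, ∀ m : ℕ, m₀ ≤ m → ∀ k : ℕ, 1 ≤ k → 100 * k ≤ 99 * m →
      ∃ μ : Finset (KSubset m k) × Finset (KSubset m k) → ℝ,
        IsDistribution μ ∧
        (∀ R, μ R ≠ 0 → ∀ a ∈ R.1, ∀ b ∈ R.2, (a.1 ∩ b.1).Nonempty) ∧
        IsHitting μ (1 / 10) ((k / 100 : ℕ) : ℤ) := by
  classical
  refine ⟨1, fun m _ k hk hkm => ?_⟩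
  have hm : 0 < m := by omega
  set f : Fin m → Finset (KSubset m k) × Finset (KSubset m k) :=
    fun i => (univ.filter (fun a => i ∈ a.1), univ.filter (fun b => i ∈ b.1)) with hf
  refine ⟨fun R => ((univ.filter (fun i => f i = R)).card : ℝ) / m, ⟨?_, ?_⟩, ?_, ?_⟩
  · intro R; positivity
  · rw [← Finset.sum_div]
    rw [div_eq_one_iff_eq (by exact_mod_cast hm.ne')]
    have hN : ∑ R : Finset (KSubset m k) × Finset (KSubset m k),
        (univ.filter (fun i => f i = R)).card = m := by
      rw [Finset.sum_card_fiberwise_eq_card_filter]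
      simp
    exact_mod_cast hN
  · intro R hR a ha b hb
    have hne : (univ.filter (fun i => f i = R)).Nonempty := by
      rw [Finset.nonempty_iff_ne_empty]
      intro hemp
      apply hR
      show ((univ.filter (fun i => f i = R)).card : ℝ) / m = 0
      rw [hemp]
      simp
    obtain ⟨i, hi⟩ := hne
    have hfi : f i = R := (Finset.mem_filter.1 hi).2
    refine ⟨i, Finset.mem_inter.2 ⟨?_, ?_⟩⟩
    · have : a ∈ (f i).1 := hfi ▸ ha
      exact (Finset.mem_filter.1 this).2
    · have : b ∈ (f i).2 := hfi ▸ hb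
      exact (Finset.mem_filter.1 this).2
  · intro X Y hX hY
    -- convert hypotheses to ℕ
    have hcard : (Fintype.card (KSubset m k) : ℝ) = (Nat.choose m k : ℝ) := by
      rw [Fintype.card_finset_len, Fintype.card_fin]
    have key : ∀ Z : Finset (KSubset m k),
        (2 : ℝ) ^ (-((k / 100 : ℕ) : ℤ)) * (Fintype.card (KSubset m k) : ℝ) ≤ Z.card →
        Nat.choose m k ≤ 2 ^ (k / 100) * Z.card := by
      intro Z hZ
      rw [hcard, zpow_neg, zpow_natCast] at hZ
      have h2 : (0:ℝ) < 2 ^ (k / 100) := by positivity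
      rw [inv_mul_le_iff₀ h2] at hZ
      exact_mod_cast hZ
    have hUX := union_large m k hk hkm X (key X hX)
    have hUY := union_large m k hk hkm Y (key Y hY)
    set UX := X.biUnion (fun a => a.1) with hUXdef
    set UY := Y.biUnion (fun a => a.1) with hUYdef
    -- compute hitProb
    have hPcalc : hitProb (fun R => ((univ.filter (fun i => f i = R)).card : ℝ) / m) X Y
        = ((UX ∩ UY).card : ℝ) / m := by
      unfold hitProb
      rw [← Finset.sum_div]
      congr 1
      rw [← Nat.cast_sum, Finset.sum_card_fiberwise_eq_card_filter]
      congr 2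
      ext i
      simp only [Finset.mem_filter, Finset.mem_univ, true_and, Finset.mem_inter, hf]
      constructor
      · rintro ⟨⟨a, ha⟩, ⟨b, hb⟩⟩
        simp only [Finset.mem_inter, Finset.mem_filter, Finset.mem_univ, true_and] at ha hb
        exact ⟨Finset.mem_biUnion.2 ⟨a, ha.2, ha.1⟩, Finset.mem_biUnion.2 ⟨b, hb.2, hb.1⟩⟩
      · rintro ⟨h1, h2⟩
        obtain ⟨a, haX, hia⟩ := Finset.mem_biUnion.1 h1
        obtain ⟨b, hbY, hib⟩ := Finset.mem_biUnion.1 h2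
        exact ⟨⟨a, Finset.mem_inter.2 ⟨Finset.mem_filter.2 ⟨Finset.mem_univ _, hia⟩, haX⟩⟩,
               ⟨b, Finset.mem_inter.2 ⟨Finset.mem_filter.2 ⟨Finset.mem_univ _, hib⟩, hbY⟩⟩⟩
    -- now the counting bound
    have hunion : (UX ∪ UY).card + (UX ∩ UY).card = UX.card + UY.card :=
      Finset.card_union_add_card_inter UX UY
    have hle : (UX ∪ UY).card ≤ m := by
      have := Finset.card_le_univ (UX ∪ UY)
      simpa using this
    have hnat : 9 * m ≤ 10 * (UX ∩ UY).card := by omega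
    have hm' : (0:ℝ) < m := by exact_mod_cast hm
    rw [hPcalc, show (1:ℝ) - 1/10 = 9/10 by norm_num, div_le_div_iff₀ (by norm_num) hm']
    calc (9:ℝ) * m ≤ 10 * (UX ∩ UY).card := by exact_mod_cast hnat
      _ = ((UX ∩ UY).card) * 10 := by ring
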